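/- Let M > 1. For (x, y) ∈ (0,1) × (0,1), the inequality y(1 − y) / (x + y − 2xy − 1)² > M holds if and only if either ( 0 < y < 1/(1+M) and γ₀(y) < x < 1 ) or ( M/(1+M) < y < 1 and 0 < x < γ₀(y) ), where γ₀(y) = 1 − ( √((1/y − 1)/M) − 1 ) / (1/y − 2). -/

import Mathlib

open Set

set_option maxHeartbeats 1000000 in
/-- Equation (6): characterization of the `M`-sensitive region of the Bradley–Terry
model, where `x = p_ik`, `y = p_kj` and
`γ₀(y) = 1 − (√((1/y − 1)/M) − 1)/(1/y − 2)`. -/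
theorem stmt_8 (M : ℝ) (hM : 1 < M)
    (γ₀ : ℝ → ℝ)
    (hγ₀ : ∀ y : ℝ, γ₀ y = 1 - (Real.sqrt ((1 / y - 1) / M) - 1) / (1 / y - 2)) :
    ∀ x ∈ Ioo (0 : ℝ) 1, ∀ y ∈ Ioo (0 : ℝ) 1,
      (y * (1 - y) / (x + y - 2 * x * y - 1) ^ 2 > M ↔
        (0 < y ∧ y < 1 / (1 + M) ∧ γ₀ y < x ∧ x < 1) ∨
        (M / (1 + M) < y ∧ y < 1 ∧ 0 < x ∧ x < γ₀ y)) := by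
  intro x hx y hy
  obtain ⟨hx0, hx1⟩ := hx
  obtain ⟨hy0, hy1⟩ := hy
  have hM0 : (0:ℝ) < M := by linarith
  set s := Real.sqrt (y * (1 - y) / M) with hs
  have hsnn : 0 ≤ s := Real.sqrt_nonneg _
  have hnum : 0 ≤ y * (1 - y) / M := div_nonneg (by nlinarith) hM0.le
  have hs2 : s ^ 2 = y * (1 - y) / M := Real.sq_sqrt hnum
  have hsM : s ^ 2 * M = y * (1 - y) := by
    rw [hs2]; field_simp
  set d := 1 - x - y + 2 * x * y with hdd
  clear_value s d
  have hd : 0 < d := by nlinarith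
  -- key equivalence : LHS ↔ d < s
  have hkey : (y * (1 - y) / (x + y - 2 * x * y - 1) ^ 2 > M) ↔ d < s := by
    rw [show (x + y - 2 * x * y - 1) ^ 2 = d ^ 2 by rw [hdd]; ring, gt_iff_lt,
      lt_div_iff₀ (pow_pos hd 2), hs, Real.lt_sqrt hd.le, lt_div_iff₀ hM0]
    constructor <;> intro h <;> nlinarith
  -- sqrt simplification
  have hy0' : y ≠ 0 := ne_of_gt hy0
  have hsqrt : Real.sqrt ((1 / y - 1) / M) = s / y := by
    rw [show (1 / y - 1) / M = (y * (1 - y) / M) / y ^ 2 by field_simp,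
      Real.sqrt_div hnum, Real.sqrt_sq hy0.le, ← hs]
  have hgam : y ≠ 1/2 → γ₀ y = (1 - y - s) / (1 - 2 * y) := by
    intro hne
    have h2 : 1 - 2 * y ≠ 0 := fun h => hne (by linarith)
    have h2' : 1 - y * 2 ≠ 0 := fun h => hne (by linarith)
    rw [hγ₀ y, hsqrt]
    field_simp
    ring
  have ha : y < 1/2 → (γ₀ y < x ↔ d < s) := by
    intro hlt
    rw [hgam (by linarith), div_lt_iff₀ (by linarith : (0:ℝ) < 1 - 2 * y)]
    constructor <;> intro h <;> nlinarith
  have hb : 1/2 < y → (x < γ₀ y ↔ d < s) := by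
    intro hlt
    rw [hgam (by linarith), lt_div_iff_of_neg (by linarith : 1 - 2 * y < 0)]
    constructor <;> intro h <;> nlinarith
  rw [hkey]
  constructor
  · intro hds
    rcases lt_trichotomy y (1/2) with hlt | heq | hgt
    · left
      refine ⟨hy0, ?_, (ha hlt).mpr hds, hx1⟩
      have hy_s : y < s := by
        linarith [mul_pos (by linarith : (0:ℝ) < 1 - x) (by linarith : (0:ℝ) < 1 - 2*y)]
      have hys2 : y ^ 2 < s ^ 2 := by nlinarith [mul_self_lt_mul_self hy0.le hy_s]
      rw [lt_div_iff₀ (by linarith : (0:ℝ) < 1 + M)]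
      nlinarith [hsM, hys2, mul_pos hM0 hy0]
    · exfalso
      have hd2 : d = 1/2 := by rw [hdd, heq]; ring
      have hss : (1:ℝ)/2 < s := by rw [← hd2]; exact hds
      have h4 : (1:ℝ)/4 < s ^ 2 := by nlinarith
      have hsM' : s ^ 2 * M = 1/4 := by rw [hsM, heq]; norm_num
      nlinarith [hsM', h4]
    · right
      refine ⟨?_, hy1, hx0, (hb hgt).mpr hds⟩
      have hy_s : 1 - y < s := by
        linarith [mul_pos hx0 (by linarith : (0:ℝ) < 2*y - 1)]
      have hys2 : (1 - y) ^ 2 < s ^ 2 := by nlinarith [mul_self_lt_mul_self (by linarith : (0:ℝ) ≤ 1 - y) hy_s]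
      rw [div_lt_iff₀ (by linarith : (0:ℝ) < 1 + M)]
      nlinarith [hsM, hys2]
  · rintro (⟨-, h1, h2, -⟩ | ⟨h1, -, -, h2⟩)
    · have hlt : y < 1/2 := by
        rw [lt_div_iff₀ (by linarith : (0:ℝ) < 1 + M)] at h1
        nlinarith
      exact (ha hlt).mp h2
    · have hgt : 1/2 < y := by
        rw [div_lt_iff₀ (by linarith : (0:ℝ) < 1 + M)] at h1
        nlinarith
      exact (hb hgt).mp h2
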